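/- For t ≥ 2, the number of nice subsets B of {1,...,t-1} achieving the maximal weight (Σ_{x∈B} x) - C(|B|,2) = floor((1/3)·C(t+1,2)) is 2 if t ≡ 1 (mod 3) and 1 otherwise. -/

import Mathlib

/-- The set of "nice" subsets of {1,...,t-1}: no two elements differ by exactly 1. -/
def niceSets (t : ℕ) : Finset (Finset ℕ) :=
  (Finset.Icc 1 (t - 1)).powerset.filter (fun B => ∀ x ∈ B, x + 1 ∉ B)

/-- The weight of a finite set of naturals: (Σ x) - C(|B|,2). -/
def weight (B : Finset ℕ) : ℤ := (∑ x ∈ B, (x : ℤ)) - (B.card.choose 2 : ℤ)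


lemma sum_le_aux : ∀ (B : Finset ℕ) (N : ℤ), (∀ x ∈ B, (x:ℤ) ≤ N) → (∀ x ∈ B, x + 1 ∉ B) →
    (∑ x ∈ B, (x:ℤ)) + B.card * (B.card - 1) ≤ B.card * N := by
  intro B
  induction B using Finset.strongInduction with
  | _ B ih =>
    intro N hB hnice
    rcases B.eq_empty_or_nonempty with rfl | hne
    · simp
    · set m := B.max' hne with hm
      have hmB : m ∈ B := B.max'_mem hne
      set B' := B.erase m with hB'def
      have hsub : B' ⊂ B := Finset.erase_ssubset hmB
      have hB'le : ∀ x ∈ B', (x:ℤ) ≤ (m:ℤ) - 2 := by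
        intro x hx
        have h1 : x ∈ B := Finset.mem_of_mem_erase hx
        have h2 : x ≠ m := Finset.ne_of_mem_erase hx
        have h3 : x + 1 ≠ m := fun h => hnice x h1 (h ▸ hmB)
        have h4 := B.le_max' x h1
        omega
      have hnice' : ∀ x ∈ B', x + 1 ∉ B' := fun x hx h =>
        hnice x (Finset.mem_of_mem_erase hx) (Finset.mem_of_mem_erase h)
      have IH := ih B' hsub ((m:ℤ) - 2) hB'le hnice'
      have hsum : (∑ x ∈ B, (x:ℤ)) = m + ∑ x ∈ B', (x:ℤ) := (Finset.add_sum_erase B _ hmB).symm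
      have hcard : B.card = B'.card + 1 := by
        rw [hB'def, Finset.card_erase_of_mem hmB]
        have := Finset.card_pos.mpr hne; omega
      have hmN : (m:ℤ) ≤ N := hB m hmB
      have hc : (0:ℤ) ≤ (B'.card:ℤ) := Int.natCast_nonneg _
      rw [hsum, hcard]
      push_cast
      nlinarith [IH, mul_le_mul_of_nonneg_left hmN (by linarith : (0:ℤ) ≤ (B'.card:ℤ)+1)]

lemma eq_top_aux : ∀ (B : Finset ℕ) (n : ℕ), (∀ x ∈ B, x ≤ n) → (∀ x ∈ B, x + 1 ∉ B) →
    ((∑ x ∈ B, (x:ℤ)) + B.card * (B.card - 1) = B.card * n) →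
    B = (Finset.range B.card).image (fun i => n - 2 * i) := by
  intro B
  induction B using Finset.strongInduction with
  | _ B ih =>
    intro n hB hnice heq
    rcases B.eq_empty_or_nonempty with rfl | hne
    · simp
    · set m := B.max' hne with hm
      have hmB : m ∈ B := B.max'_mem hne
      set B' := B.erase m with hB'def
      have hsub : B' ⊂ B := Finset.erase_ssubset hmB
      have hB'le : ∀ x ∈ B', x + 2 ≤ m := by
        intro x hx
        have h1 : x ∈ B := Finset.mem_of_mem_erase hx
        have h2 : x ≠ m := Finset.ne_of_mem_erase hx
        have h3 : x + 1 ≠ m := fun h => hnice x h1 (h ▸ hmB)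
        have h4 := B.le_max' x h1
        omega
      have hnice' : ∀ x ∈ B', x + 1 ∉ B' := fun x hx h =>
        hnice x (Finset.mem_of_mem_erase hx) (Finset.mem_of_mem_erase h)
      have IH1 := sum_le_aux B' ((m:ℤ) - 2) (fun x hx => by have := hB'le x hx; omega) hnice'
      have hsum : (∑ x ∈ B, (x:ℤ)) = m + ∑ x ∈ B', (x:ℤ) := (Finset.add_sum_erase B _ hmB).symm
      have hcard : B.card = B'.card + 1 := by
        rw [hB'def, Finset.card_erase_of_mem hmB]
        have := Finset.card_pos.mpr hne; omega
      have hmn : m ≤ n := hB m hmB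
      have hmeqn : m = n := by
        by_contra hcon
        have h1 : (m:ℤ) + 1 ≤ n := by omega
        have hc : (0:ℤ) ≤ (B'.card:ℤ) := Int.natCast_nonneg _
        rw [hsum, hcard] at heq
        push_cast at heq
        nlinarith [IH1]
      subst hmeqn
      have heq' : (∑ x ∈ B', (x:ℤ)) + B'.card * (B'.card - 1) = B'.card * ((m:ℤ) - 2) := by
        rw [hsum, hcard] at heq
        push_cast at heq
        nlinarith [IH1]
      rcases B'.eq_empty_or_nonempty with hB'e | hB'ne
      · have hBm : B = {m} := by
          rw [← Finset.insert_erase hmB, ← hB'def, hB'e]; rfl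
        rw [hBm]
        have hc1 : ({m} : Finset ℕ).card = 1 := rfl
        rw [hc1]
        ext x
        simp
      · obtain ⟨y, hy⟩ := hB'ne
        have hm2 : 2 ≤ m := by have := hB'le y hy; omega
        have heq'' : (∑ x ∈ B', (x:ℤ)) + B'.card * (B'.card - 1) = B'.card * ((m - 2 : ℕ):ℤ) := by
          rw [heq']; congr 1; omega
        have IH2 := ih B' hsub (m - 2) (fun x hx => by have := hB'le x hx; omega) hnice' heq''
        have hmem : ∀ x, x ∈ B ↔ (x = m ∨ ∃ i < B'.card, (m - 2) - 2*i = x) := by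
          intro x
          constructor
          · intro hxB
            rcases eq_or_ne x m with rfl | hne'
            · exact Or.inl rfl
            · have hx' : x ∈ B' := by rw [hB'def]; exact Finset.mem_erase.mpr ⟨hne', hxB⟩
              rw [IH2] at hx'
              simp only [Finset.mem_image, Finset.mem_range] at hx'
              obtain ⟨i, hi, hix⟩ := hx'
              exact Or.inr ⟨i, hi, hix⟩
          · rintro (rfl | ⟨i, hi, rfl⟩)
            · exact hmB
            · have hx' : (m-2) - 2*i ∈ B' := by
                rw [IH2]
                simp only [Finset.mem_image, Finset.mem_range]
                exact ⟨i, hi, rfl⟩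
              exact Finset.mem_of_mem_erase hx'
        ext x
        rw [hcard]
        simp only [Finset.mem_image, Finset.mem_range]
        rw [hmem x]
        constructor
        · rintro (rfl | ⟨i, hi, rfl⟩)
          · exact ⟨0, by omega, by omega⟩
          · exact ⟨i + 1, by omega, by omega⟩
        · rintro ⟨i, hi, rfl⟩
          rcases i with _ | j
          · left; omega
          · right; exact ⟨j, by omega, by omega⟩


def topSet (t k : ℕ) : Finset ℕ := (Finset.range k).image (fun i => t - 1 - 2 * i)

lemma card_topSet {t k : ℕ} (h : 2*k ≤ t) : (topSet t k).card = k := by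
  rw [topSet, Finset.card_image_of_injOn, Finset.card_range]
  intro i hi j hj hij
  simp only [Finset.coe_range, Set.mem_Iio] at hi hj
  simp only at hij
  omega

lemma topSet_subset {t k : ℕ} (h : 2*k ≤ t) : topSet t k ⊆ Finset.Icc 1 (t-1) := by
  intro x hx
  simp only [topSet, Finset.mem_image, Finset.mem_range] at hx
  obtain ⟨i, hi, rfl⟩ := hx
  simp only [Finset.mem_Icc]
  omega

lemma topSet_nice {t k : ℕ} (h : 2*k ≤ t) : ∀ x ∈ topSet t k, x + 1 ∉ topSet t k := by
  intro x hx hx1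
  simp only [topSet, Finset.mem_image, Finset.mem_range] at hx hx1
  obtain ⟨i, hi, rfl⟩ := hx
  obtain ⟨j, hj, hj'⟩ := hx1
  omega

lemma cast_sum_range_id (k : ℕ) : ((∑ i ∈ Finset.range k, i : ℕ):ℤ) * 2 = (k:ℤ)*k - k := by
  have h := Finset.sum_range_id_mul_two k
  rcases k with _ | s
  · simp
  · simp only [Nat.add_sub_cancel] at h
    have h4 := congrArg (fun n : ℕ => (n:ℤ)) h
    push_cast at h4
    push_cast
    linear_combination h4

lemma sum_topSet {t k : ℕ} (h : 2*k ≤ t) :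
    ∑ x ∈ topSet t k, (x:ℤ) = k*((t:ℤ)-1) - ((k:ℤ)*k - k) := by
  rw [topSet, Finset.sum_image (by intro i hi j hj hij; simp only [Finset.mem_coe, Finset.coe_range, Set.mem_Iio, Finset.mem_range] at hi hj hij; omega)]
  have h1 : ∀ i ∈ Finset.range k, ((t - 1 - 2*i : ℕ):ℤ) = (t:ℤ) - 1 - 2*(i:ℤ) := by
    intro i hi; simp only [Finset.mem_range] at hi; omega
  rw [Finset.sum_congr rfl h1]
  have h2 := cast_sum_range_id k
  push_cast at h2
  rw [Finset.sum_sub_distrib, Finset.sum_sub_distrib, Finset.sum_const, Finset.sum_const,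
    Finset.card_range, ← Finset.mul_sum]
  simp only [nsmul_eq_mul]
  linarith

lemma two_choose_two (k : ℕ) : ((k.choose 2 : ℕ):ℤ) * 2 = (k:ℤ)*k - k := by
  have h2 : k.choose 2 = ∑ i ∈ Finset.range k, i := by
    rw [Nat.choose_two_right, ← Finset.sum_range_id_mul_two k, Nat.mul_div_cancel]
    norm_num
  rw [h2]
  exact cast_sum_range_id k

lemma mod6 (t : ℕ) : (t+1)*t % 6 = if t % 3 = 1 then 2 else 0 := by
  obtain ⟨q, r, hr, rfl⟩ : ∃ q r, r < 6 ∧ t = 6*q + r :=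
    ⟨t/6, t%6, Nat.mod_lt _ (by norm_num), by omega⟩
  interval_cases r
  · rw [show (6*q+0+1)*(6*q+0) = 6*(q*(6*q+1)) + 0 from by ring, Nat.mul_add_mod,
      if_neg (by omega : ¬ (6*q+0) % 3 = 1)]
  · rw [show (6*q+1+1)*(6*q+1) = 6*(6*q*q+3*q) + 2 from by ring, Nat.mul_add_mod,
      if_pos (by omega : (6*q+1) % 3 = 1)]
  · rw [show (6*q+2+1)*(6*q+2) = 6*(6*q*q+5*q+1) + 0 from by ring, Nat.mul_add_mod,
      if_neg (by omega : ¬ (6*q+2) % 3 = 1)]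
  · rw [show (6*q+3+1)*(6*q+3) = 6*(6*q*q+7*q+2) + 0 from by ring, Nat.mul_add_mod,
      if_neg (by omega : ¬ (6*q+3) % 3 = 1)]
  · rw [show (6*q+4+1)*(6*q+4) = 6*(6*q*q+9*q+3) + 2 from by ring, Nat.mul_add_mod,
      if_pos (by omega : (6*q+4) % 3 = 1)]
  · rw [show (6*q+5+1)*(6*q+5) = 6*(6*q*q+11*q+5) + 0 from by ring, Nat.mul_add_mod,
      if_neg (by omega : ¬ (6*q+5) % 3 = 1)]

lemma floor6 (t : ℕ) : 6 * ((t+1).choose 2 / 3) + (if t % 3 = 1 then 2 else 0) = t * (t+1) := by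
  have hc : (t+1).choose 2 = (t+1)*t/2 := by
    rw [Nat.choose_two_right, Nat.add_sub_cancel]
  rw [hc, Nat.div_div_eq_div_mul, mul_comm t (t+1)]
  have hm := mod6 t
  have hd := Nat.div_add_mod ((t+1)*t) 6
  set P := (t+1)*t with hP
  norm_num
  by_cases h13 : t % 3 = 1
  · rw [if_pos h13] at hm ⊢; omega
  · rw [if_neg h13] at hm ⊢; omega

lemma rho_le (t k : ℕ) : (if t % 3 = 1 then (2:ℤ) else 0) ≤ ((t:ℤ) - 3*k)*(((t:ℤ) - 3*k) + 1) := by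
  set d : ℤ := (t:ℤ) - 3*k with hd
  by_cases h13 : t % 3 = 1
  · rw [if_pos h13]
    have hcase : d ≥ 1 ∨ d ≤ -2 := by omega
    rcases hcase with h | h <;> nlinarith
  · rw [if_neg h13]
    rcases le_or_gt 0 d with h | h
    · exact mul_nonneg h (by linarith)
    · have h' : d + 1 ≤ 0 := by omega
      nlinarith

/-- The number of nice subsets of {1,...,t-1} achieving the maximal weight ⌊C(t+1,2)/3⌋
is 2 if t ≡ 1 (mod 3) and 1 otherwise. -/
theorem nice_max_weight_count (t : ℕ) (ht : 2 ≤ t) :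
    ((niceSets t).filter (fun B => weight B = (((t + 1).choose 2 / 3 : ℕ) : ℤ))).card =
      if t % 3 = 1 then 2 else 1 := by
  have hF6 : (6:ℤ) * (((t+1).choose 2 / 3 : ℕ):ℤ) + (if t % 3 = 1 then (2:ℤ) else 0)
      = (t:ℤ)*((t:ℤ)+1) := by
    have h := floor6 t
    by_cases h13 : t % 3 = 1
    · rw [if_pos h13] at h ⊢; exact_mod_cast h
    · rw [if_neg h13] at h ⊢; exact_mod_cast h
  have hmem : ∀ B : Finset ℕ,
      B ∈ (niceSets t).filter (fun B => weight B = (((t + 1).choose 2 / 3 : ℕ) : ℤ)) ↔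
      (B ⊆ Finset.Icc 1 (t-1) ∧ (∀ x ∈ B, x + 1 ∉ B) ∧
        weight B = (((t + 1).choose 2 / 3 : ℕ) : ℤ)) := by
    intro B
    simp [niceSets, Finset.mem_filter, Finset.mem_powerset, and_assoc]
  have hforward : ∀ B : Finset ℕ, B ⊆ Finset.Icc 1 (t-1) → (∀ x ∈ B, x + 1 ∉ B) →
      weight B = (((t + 1).choose 2 / 3 : ℕ) : ℤ) →
      B = topSet t B.card ∧
        ((t:ℤ) - 3*B.card) * (((t:ℤ) - 3*B.card) + 1) = (if t % 3 = 1 then (2:ℤ) else 0) := by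
    intro B hsub hnice hw
    have hBle : ∀ x ∈ B, (x:ℤ) ≤ (t:ℤ) - 1 := by
      intro x hx
      have := Finset.mem_Icc.mp (hsub hx)
      omega
    have hle := sum_le_aux B ((t:ℤ)-1) hBle hnice
    have hch := two_choose_two B.card
    have hw6 : 6 * (∑ x ∈ B, (x:ℤ)) =
        6 * (((t + 1).choose 2 / 3 : ℕ):ℤ) + 3*((B.card:ℤ)*B.card - B.card) := by
      unfold weight at hw; linarith
    have hρle : ((t:ℤ) - 3*B.card) * (((t:ℤ) - 3*B.card) + 1) ≤ (if t % 3 = 1 then (2:ℤ) else 0) := by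
      nlinarith [hle, hw6, hF6]
    have heqd := le_antisymm hρle (rho_le t B.card)
    refine ⟨?_, heqd⟩
    have hsum6 : 6*((∑ x ∈ B, (x:ℤ)) + (B.card:ℤ)*((B.card:ℤ)-1)) =
        6*((B.card:ℤ) * ((t:ℤ)-1)) := by
      linear_combination hw6 + hF6 + heqd
    have hsum_eq : (∑ x ∈ B, (x:ℤ)) + (B.card:ℤ)*((B.card:ℤ)-1) = (B.card:ℤ) * ((t:ℤ)-1) := by
      linarith
    have hcast : ((t-1:ℕ):ℤ) = (t:ℤ) - 1 := by omega
    exact eq_top_aux B (t-1) (fun x hx => (Finset.mem_Icc.mp (hsub hx)).2) hnice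
      (by rw [hcast]; exact hsum_eq)
  have hback : ∀ k : ℕ, 2*k ≤ t →
      ((t:ℤ) - 3*k) * (((t:ℤ) - 3*k) + 1) = (if t % 3 = 1 then (2:ℤ) else 0) →
      (topSet t k ⊆ Finset.Icc 1 (t-1) ∧ (∀ x ∈ topSet t k, x + 1 ∉ topSet t k) ∧
        weight (topSet t k) = (((t + 1).choose 2 / 3 : ℕ) : ℤ)) := by
    intro k h2k hdd
    refine ⟨topSet_subset h2k, topSet_nice h2k, ?_⟩
    unfold weight
    rw [card_topSet h2k, sum_topSet h2k]
    have hch := two_choose_two k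
    have h6 : 6 * ((k:ℤ)*((t:ℤ)-1) - ((k:ℤ)*k - k) - (k.choose 2:ℤ)) =
        6 * (((t + 1).choose 2 / 3 : ℕ):ℤ) := by
      linear_combination -3*hch - hF6 - hdd
    linarith
  obtain ⟨m, r, hr3, rfl⟩ : ∃ m r, r < 3 ∧ t = 3*m + r :=
    ⟨t/3, t%3, Nat.mod_lt _ (by norm_num), by omega⟩
  interval_cases r
  · -- t = 3m, answer 1, k = m
    rw [if_neg (by omega)]
    have hS : ((niceSets (3*m+0)).filter
        (fun B => weight B = ((((3*m+0) + 1).choose 2 / 3 : ℕ) : ℤ))) = {topSet (3*m+0) m} := by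
      ext B
      rw [hmem, Finset.mem_singleton]
      constructor
      · rintro ⟨h1, h2, h3⟩
        obtain ⟨hB, hdd⟩ := hforward B h1 h2 h3
        rw [if_neg (by omega)] at hdd
        have hkm : B.card = m := by
          rcases mul_eq_zero.mp hdd with h | h <;> omega
        rw [hkm] at hB; exact hB
      · rintro rfl
        exact hback m (by omega) (by
          rw [if_neg (by omega)]
          have h0 : ((3*m+0:ℕ):ℤ) - 3*(m:ℤ) = 0 := by push_cast; ring
          rw [h0]; ring)
    rw [hS, Finset.card_singleton]
  · -- t = 3m+1, answer 2, k = m or m+1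
    rw [if_pos (by omega)]
    have hm1 : 1 ≤ m := by omega
    have hS : ((niceSets (3*m+1)).filter
        (fun B => weight B = ((((3*m+1) + 1).choose 2 / 3 : ℕ) : ℤ))) =
        {topSet (3*m+1) m, topSet (3*m+1) (m+1)} := by
      ext B
      rw [hmem, Finset.mem_insert, Finset.mem_singleton]
      constructor
      · rintro ⟨h1, h2, h3⟩
        obtain ⟨hB, hdd⟩ := hforward B h1 h2 h3
        rw [if_pos (by omega)] at hdd
        have hfact : (((3*m+1:ℕ):ℤ) - 3*B.card - 1) * (((3*m+1:ℕ):ℤ) - 3*B.card + 2) = 0 := by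
          linear_combination hdd
        have hkm : B.card = m ∨ B.card = m + 1 := by
          rcases mul_eq_zero.mp hfact with h | h <;> [left; right] <;> omega
        rcases hkm with h | h
        · left; rw [h] at hB; exact hB
        · right; rw [h] at hB; exact hB
      · rintro (rfl | rfl)
        · exact hback m (by omega) (by
            rw [if_pos (by omega)]
            have h0 : ((3*m+1:ℕ):ℤ) - 3*(m:ℤ) = 1 := by push_cast; ring
            rw [h0]; ring)
        · exact hback (m+1) (by omega) (by
            rw [if_pos (by omega)]
            have h0 : ((3*m+1:ℕ):ℤ) - 3*((m+1:ℕ):ℤ) = -2 := by push_cast; ring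
            rw [h0]; ring)
    rw [hS]
    rw [Finset.card_insert_of_notMem, Finset.card_singleton]
    intro hcon
    rw [Finset.mem_singleton] at hcon
    have := congrArg Finset.card hcon
    rw [card_topSet (by omega), card_topSet (by omega)] at this
    omega
  · -- t = 3m+2, answer 1, k = m+1
    rw [if_neg (by omega)]
    have hS : ((niceSets (3*m+2)).filter
        (fun B => weight B = ((((3*m+2) + 1).choose 2 / 3 : ℕ) : ℤ))) = {topSet (3*m+2) (m+1)} := by
      ext B
      rw [hmem, Finset.mem_singleton]
      constructor
      · rintro ⟨h1, h2, h3⟩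
        obtain ⟨hB, hdd⟩ := hforward B h1 h2 h3
        rw [if_neg (by omega)] at hdd
        have hkm : B.card = m + 1 := by
          rcases mul_eq_zero.mp hdd with h | h <;> omega
        rw [hkm] at hB; exact hB
      · rintro rfl
        exact hback (m+1) (by omega) (by
          rw [if_neg (by omega)]
          have h0 : ((3*m+2:ℕ):ℤ) - 3*((m+1:ℕ):ℤ) = -1 := by push_cast; ring
          rw [h0]; ring)
    rw [hS, Finset.card_singleton]
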